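/- The images of the elements x^i · f_k(x,y) for 0 ≤ i ≤ n-1 and k ≥ 0 form a ℤ-basis of the quotient ring ℤ[x,y]/⟨x^n - 1⟩. -/

import Mathlib

/-- Generalized Fibonacci polynomials in ℤ[x,y] (x = X 0, y = X 1):
f_0 = 1, f_1 = y, f_k = y·f_{k-1} - x·f_{k-2}. -/
noncomputable def f2 : ℕ → MvPolynomial (Fin 2) ℤ
  | 0 => 1
  | 1 => MvPolynomial.X 1
  | k + 2 => MvPolynomial.X 1 * f2 (k + 1) - MvPolynomial.X 0 * f2 k

open Polynomial

noncomputable def Gfib (n : ℕ) : ℕ → Polynomial (AdjoinRoot ((Polynomial.X : Polynomial ℤ)^n - 1))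
  | 0 => 1
  | 1 => Polynomial.X
  | k+2 => Polynomial.X * Gfib n (k+1) - Polynomial.C (AdjoinRoot.root _) * Gfib n k

lemma Gfib_succ_succ (n k : ℕ) : Gfib n (k+2) =
    Polynomial.X * Gfib n (k+1) - Polynomial.C (AdjoinRoot.root _) * Gfib n k := rfl

lemma Gfib_aux (n : ℕ) : ∀ k, ((Gfib n k).natDegree ≤ k ∧ (Gfib n k).coeff k = 1) ∧
    ((Gfib n (k+1)).natDegree ≤ k+1 ∧ (Gfib n (k+1)).coeff (k+1) = 1) := by
  intro k
  induction k with
  | zero => exact ⟨⟨by simp [Gfib], by simp [Gfib]⟩, natDegree_X_le, by simp [Gfib]⟩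
  | succ k ih =>
    refine ⟨ih.2, ?_, ?_⟩
    · rw [show k + 1 + 1 = k + 2 from rfl, Gfib_succ_succ]
      refine le_trans (natDegree_sub_le _ _) (max_le ?_ ?_)
      · exact le_trans (natDegree_mul_le) (by have := ih.2.1; have := natDegree_X_le (R := AdjoinRoot ((Polynomial.X : Polynomial ℤ)^n - 1)); omega)
      · exact le_trans (natDegree_mul_le) (by have := ih.1.1; have : (Polynomial.C (AdjoinRoot.root ((Polynomial.X : Polynomial ℤ)^n - 1))).natDegree = 0 := natDegree_C _; omega)
    · rw [show k + 1 + 1 = k + 2 from rfl, Gfib_succ_succ]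
      have h2 : (Gfib n k).coeff (k+2) = 0 :=
        coeff_eq_zero_of_natDegree_lt (lt_of_le_of_lt ih.1.1 (by omega))
      have h1 : (Gfib n (k+1)).coeff (k+1) = 1 := ih.2.2
      rw [coeff_sub, coeff_C_mul, h2]
      rw [show k+2 = (k+1)+1 from rfl, coeff_X_mul, h1]
      ring

lemma Gfib_natDegree_le (n k : ℕ) : (Gfib n k).natDegree ≤ k := (Gfib_aux n k).1.1
lemma Gfib_coeff_self (n k : ℕ) : (Gfib n k).coeff k = 1 := (Gfib_aux n k).1.2

lemma root_powers_li (n : ℕ) (hn : 1 ≤ n) :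
    LinearIndependent ℤ (fun i : Fin n =>
      (AdjoinRoot.root ((Polynomial.X : Polynomial ℤ)^n - 1)) ^ (i : ℕ)) := by
  have hm : ((Polynomial.X : Polynomial ℤ)^n - 1).Monic := by
    simpa using monic_X_pow_sub_C (1 : ℤ) (by omega : n ≠ 0)
  set pb := AdjoinRoot.powerBasis' hm with hpb
  have hdim : pb.dim = n := by
    have h1 : ((Polynomial.X : Polynomial ℤ)^n - 1).natDegree = n := by
      simpa using natDegree_X_pow_sub_C (n := n) (r := (1 : ℤ))
    simp [hpb, AdjoinRoot.powerBasis', h1]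
  have hgen : pb.gen = AdjoinRoot.root _ := by
    simp [hpb, AdjoinRoot.powerBasis']
  have h := pb.basis.linearIndependent.comp
    (fun i : Fin n => Fin.cast hdim.symm i)
    (fun a b hab => by simpa [Fin.ext_iff] using hab)
  convert h using 1
  funext i
  simp [Function.comp, PowerBasis.coe_basis, hgen]
  · rfl
  · exact Subsingleton.elim _ _

lemma key_indep (n : ℕ) (hn : 1 ≤ n) :
    ∀ (N : ℕ) (l : (Fin n × ℕ) →₀ ℤ), (∀ p ∈ l.support, p.2 < N) →
      (l.sum fun p c => c • (Polynomial.C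
          ((AdjoinRoot.root ((Polynomial.X : Polynomial ℤ)^n - 1)) ^ (p.1 : ℕ)) * Gfib n p.2)) = 0 →
      l = 0 := by
  intro N
  induction N with
  | zero =>
    intro l hsupp _
    ext p
    by_contra h
    exact absurd (hsupp p (Finsupp.mem_support_iff.mpr h)) (by omega)
  | succ N ih =>
    intro l hsupp hsum
    set r := AdjoinRoot.root ((Polynomial.X : Polynomial ℤ)^n - 1) with hr
    -- take coefficient N
    have hc : (l.sum fun p c => c • (Polynomial.C (r ^ (p.1 : ℕ)) * Gfib n p.2)).coeff N = 0 := by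
      rw [hsum]; simp
    rw [Finsupp.sum, finset_sum_coeff] at hc
    have hterm : ∀ p ∈ l.support,
        (l p • (Polynomial.C (r ^ (p.1 : ℕ)) * Gfib n p.2)).coeff N
          = if p.2 = N then l (p.1, N) • r ^ (p.1 : ℕ) else 0 := by
      intro p hp
      rw [coeff_smul, coeff_C_mul]
      by_cases hpN : p.2 = N
      · rw [if_pos hpN, hpN, Gfib_coeff_self, mul_one]
        congr 1
        · exact congrArg l (Prod.ext rfl hpN)
      · rw [if_neg hpN]
        have : (Gfib n p.2).coeff N = 0 := by
          apply coeff_eq_zero_of_natDegree_lt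
          have := hsupp p hp
          exact lt_of_le_of_lt (Gfib_natDegree_le n p.2) (by omega)
        rw [this, mul_zero, smul_zero]
    rw [Finset.sum_congr rfl hterm, ← Finset.sum_filter] at hc
    -- turn into a sum over Fin n
    have himg : l.support.filter (fun p => p.2 = N) ⊆
        Finset.univ.image (fun i : Fin n => (i, N)) := by
      intro p hp
      rw [Finset.mem_filter] at hp
      exact Finset.mem_image.mpr ⟨p.1, Finset.mem_univ _, (Prod.ext rfl hp.2.symm)⟩
    rw [Finset.sum_subset himg (fun p hpi hnp => by
      rw [Finset.mem_filter] at hnp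
      rcases Finset.mem_image.mp hpi with ⟨i, _, rfl⟩
      have : l (i, N) = 0 := by
        by_contra hne
        exact hnp ⟨Finsupp.mem_support_iff.mpr hne, rfl⟩
      simp [this])] at hc
    rw [Finset.sum_image (fun a _ b _ hab => (Prod.ext_iff.mp hab).1)] at hc
    -- linear independence of root powers
    have hzero : ∀ i : Fin n, l (i, N) = 0 :=
      Fintype.linearIndependent_iff.mp (root_powers_li n hn) (fun i => l (i, N)) hc
    apply ih l _ hsum
    intro p hp
    have h1 := hsupp p hp
    rcases Nat.lt_succ_iff_lt_or_eq.mp h1 with h | h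
    · exact h
    · exfalso
      have := hzero p.1
      rw [← h] at this
      exact Finsupp.mem_support_iff.mp hp (by rw [← this])


/-- the evaluation map sending x to C root, y to Y. -/
noncomputable def psi (n : ℕ) : MvPolynomial (Fin 2) ℤ →ₐ[ℤ]
    Polynomial (AdjoinRoot ((Polynomial.X : Polynomial ℤ)^n - 1)) :=
  MvPolynomial.aeval ![Polynomial.C (AdjoinRoot.root _), Polynomial.X]

lemma psi_X0 (n : ℕ) : psi n (MvPolynomial.X 0) = Polynomial.C (AdjoinRoot.root _) := by
  simp [psi]

lemma psi_X1 (n : ℕ) : psi n (MvPolynomial.X 1) = Polynomial.X := by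
  simp [psi]

lemma psi_f2 (n : ℕ) : ∀ k, psi n (f2 k) = Gfib n k := by
  have H : ∀ k, psi n (f2 k) = Gfib n k ∧ psi n (f2 (k+1)) = Gfib n (k+1) := by
    intro k
    induction k with
    | zero => constructor <;> simp [f2, Gfib, psi]
    | succ k ih =>
      refine ⟨ih.2, ?_⟩
      show psi n (f2 (k+2)) = Gfib n (k+2)
      rw [show f2 (k+2) = MvPolynomial.X 1 * f2 (k+1) - MvPolynomial.X 0 * f2 k from rfl,
        Gfib_succ_succ, map_sub, map_mul, map_mul, psi_X0, psi_X1, ih.1, ih.2]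
  exact fun k => (H k).1

lemma psi_ker (n : ℕ) : ∀ a ∈ Ideal.span {(MvPolynomial.X 0 : MvPolynomial (Fin 2) ℤ) ^ n - 1},
    psi n a = 0 := by
  intro a ha
  rcases Ideal.mem_span_singleton'.mp ha with ⟨c, rfl⟩
  rw [map_mul, map_sub, map_pow, psi_X0, map_one, ← Polynomial.C_pow]
  have h0 : (AdjoinRoot.root ((Polynomial.X : Polynomial ℤ)^n - 1))^n - 1 = 0 := by
    have := AdjoinRoot.eval₂_root ((Polynomial.X : Polynomial ℤ)^n - 1)
    simpa using this
  rw [sub_eq_zero] at h0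
  rw [h0, Polynomial.C_1, sub_self, mul_zero]


open MvPolynomial in
/-- the images of x^i f_k(x,y), 0 ≤ i ≤ n-1, k ≥ 0, form a
ℤ-basis of ℤ[x,y]/⟨x^n - 1⟩. -/
theorem f2_family_basis_quotient (n : ℕ) (hn : 1 ≤ n) :
    LinearIndependent ℤ (fun p : Fin n × ℕ =>
      Ideal.Quotient.mk (Ideal.span {(X 0 : MvPolynomial (Fin 2) ℤ) ^ n - 1})
        (X 0 ^ (p.1 : ℕ) * f2 p.2)) ∧
    Submodule.span ℤ (Set.range (fun p : Fin n × ℕ =>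
      Ideal.Quotient.mk (Ideal.span {(X 0 : MvPolynomial (Fin 2) ℤ) ^ n - 1})
        (X 0 ^ (p.1 : ℕ) * f2 p.2))) = ⊤ := by
  set J : Ideal (MvPolynomial (Fin 2) ℤ) :=
    Ideal.span {(X 0 : MvPolynomial (Fin 2) ℤ) ^ n - 1} with hJ
  set mk := Ideal.Quotient.mk J with hmk
  set fam : Fin n × ℕ → MvPolynomial (Fin 2) ℤ ⧸ J :=
    fun p => mk (X 0 ^ (p.1 : ℕ) * f2 p.2) with hfam
  constructor
  · -- linear independence
    set Ψ : (MvPolynomial (Fin 2) ℤ ⧸ J) →ₗ[ℤ]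
        Polynomial (AdjoinRoot ((Polynomial.X : Polynomial ℤ)^n - 1)) :=
      ((Ideal.Quotient.lift J (psi n).toRingHom (psi_ker n)).toIntAlgHom.toLinearMap) with hΨ
    apply LinearIndependent.of_comp Ψ
    have hcomp : (⇑Ψ ∘ fam) = fun p : Fin n × ℕ =>
        Polynomial.C ((AdjoinRoot.root ((Polynomial.X : Polynomial ℤ)^n - 1)) ^ (p.1 : ℕ)) *
          Gfib n p.2 := by
      funext p
      show (Ideal.Quotient.lift J (psi n).toRingHom (psi_ker n)) (mk (X 0 ^ (p.1:ℕ) * f2 p.2)) = _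
      rw [hmk, Ideal.Quotient.lift_mk]
      show psi n (X 0 ^ (p.1:ℕ) * f2 p.2) = _
      rw [map_mul, map_pow, psi_X0, psi_f2, ← Polynomial.C_pow]
    rw [hcomp, linearIndependent_iff]
    intro l hl
    refine key_indep n hn ((l.support.sup fun p => p.2) + 1) l
      (fun p hp => Nat.lt_succ_of_le (Finset.le_sup (f := fun p : Fin n × ℕ => p.2) hp)) ?_
    rw [Finsupp.linearCombination_apply] at hl
    exact hl
  · -- spanning
    set S := Submodule.span ℤ (Set.range fam) with hS
    have hxS : ∀ q ∈ S, mk (X 0) * q ∈ S := by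
      intro q hq
      refine Submodule.span_induction (p := fun q _ => mk (X 0) * q ∈ S) ?_ ?_ ?_ ?_ hq
      · rintro x ⟨⟨i, k⟩, rfl⟩
        show mk (X 0) * mk (X 0 ^ (i:ℕ) * f2 k) ∈ S
        rw [← map_mul]
        have hrw : (X 0 : MvPolynomial (Fin 2) ℤ) * (X 0 ^ (i:ℕ) * f2 k)
            = X 0 ^ ((i:ℕ)+1) * f2 k := by ring
        rw [hrw]
        rcases lt_or_eq_of_le (Nat.succ_le_of_lt i.isLt) with h | h
        · exact Submodule.subset_span ⟨(⟨(i:ℕ)+1, h⟩, k), rfl⟩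
        · have heq : mk (X 0 ^ ((i:ℕ)+1) * f2 k) = mk (X 0 ^ ((0:ℕ)) * f2 k) := by
            rw [hmk, Ideal.Quotient.eq]
            have : (X 0 : MvPolynomial (Fin 2) ℤ) ^ ((i:ℕ)+1) * f2 k - X 0 ^ (0:ℕ) * f2 k
                = (X 0 ^ n - 1) * f2 k := by rw [show (i:ℕ)+1 = n from h]; ring
            rw [this]
            exact Ideal.mul_mem_right _ _ (Ideal.subset_span rfl)
          rw [heq]
          exact Submodule.subset_span ⟨(⟨0, hn⟩, k), rfl⟩
      · simp
      · intro x y _ _ hx hy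
        rw [mul_add]; exact add_mem hx hy
      · intro a x _ hx
        rw [mul_smul_comm]; exact Submodule.smul_mem _ _ hx
    have hyS : ∀ q ∈ S, mk (X 1) * q ∈ S := by
      intro q hq
      refine Submodule.span_induction (p := fun q _ => mk (X 1) * q ∈ S) ?_ ?_ ?_ ?_ hq
      · rintro x ⟨⟨i, k⟩, rfl⟩
        show mk (X 1) * mk (X 0 ^ (i:ℕ) * f2 k) ∈ S
        rw [← map_mul]
        match k with
        | 0 =>
          have hrw : (X 1 : MvPolynomial (Fin 2) ℤ) * (X 0 ^ (i:ℕ) * f2 0)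
              = X 0 ^ (i:ℕ) * f2 1 := by
            show (X 1 : MvPolynomial (Fin 2) ℤ) * (X 0 ^ (i:ℕ) * 1) = X 0 ^ (i:ℕ) * X 1
            ring
          rw [hrw]
          exact Submodule.subset_span ⟨(i, 1), rfl⟩
        | m + 1 =>
          have hrw : (X 1 : MvPolynomial (Fin 2) ℤ) * (X 0 ^ (i:ℕ) * f2 (m+1))
              = X 0 ^ (i:ℕ) * f2 (m+2) + X 0 * (X 0 ^ (i:ℕ) * f2 m) := by
            rw [show f2 (m+2) = X 1 * f2 (m+1) - X 0 * f2 m from rfl]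
            ring
          rw [hrw, map_add]
          refine add_mem (Submodule.subset_span ⟨(i, m+2), rfl⟩) ?_
          rw [map_mul]
          exact hxS _ (Submodule.subset_span ⟨(i, m), rfl⟩)
      · simp
      · intro x y _ _ hx hy
        rw [mul_add]; exact add_mem hx hy
      · intro a x _ hx
        rw [mul_smul_comm]; exact Submodule.smul_mem _ _ hx
    rw [eq_top_iff]
    rintro q -
    obtain ⟨p, rfl⟩ := Ideal.Quotient.mk_surjective (I := J) q
    show mk p ∈ S
    induction p using MvPolynomial.induction_on with
    | C a =>
      have hrw : (MvPolynomial.C a : MvPolynomial (Fin 2) ℤ)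
          = a • (X 0 ^ ((0:ℕ)) * f2 0) := by
        show (MvPolynomial.C a : MvPolynomial (Fin 2) ℤ) = a • ((X 0:MvPolynomial (Fin 2) ℤ) ^ ((0:ℕ)) * 1)
        rw [zsmul_eq_mul, eq_intCast MvPolynomial.C a]
        simp
      rw [hrw, map_zsmul]
      exact Submodule.smul_mem _ _ (Submodule.subset_span ⟨(⟨0, hn⟩, 0), rfl⟩)
    | add p q hp hq =>
      rw [map_add]; exact add_mem hp hq
    | mul_X p i hp =>
      rw [map_mul, mul_comm]
      fin_cases i
      · exact hxS _ hp
      · exact hyS _ hp
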